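/- arXiv:2511.02137 — 5 statements merged into one kernel-verified Lean document; each statement's English description precedes it below -/
import Mathlib

section
/- Let d be a positive integer, let v : ℝ^d × ℝ → ℝ^d be continuously differentiable, and let p : ℝ^d × ℝ → ℝ be continuously differentiable and strictly positive, satisfying the Liouville continuity equation ∂_s p(x,s) + ∑_{i=1}^d ∂_{x_i}( p(x,s) v_i(x,s) ) = 0 for all x ∈ ℝ^d and s ∈ ℝ. Let x : ℝ → ℝ^d be differentiable with x'(s) = v(x(s), s) for all s. Then for every s, the derivative of s ↦ log p(x(s), s) equals minus the spatial divergence of v at (x(s), s), i.e. d/ds [log p(x(s), s)] = − ∑_{i=1}^d ∂_{x_i} v_i(x(s), s). -/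
open scoped BigOperators

lemma euclid_decomp {d : ℕ} (w : EuclideanSpace ℝ (Fin d)) :
    w = ∑ i, w i • EuclideanSpace.single i (1:ℝ) := by
  ext j
  rw [show ((∑ i, w i • EuclideanSpace.single i (1:ℝ)) j)
      = ∑ i, (w i • EuclideanSpace.single i (1:ℝ)) j from by rw [WithLp.ofLp_sum, Finset.sum_apply]]
  simp [EuclideanSpace.single_apply]

/-- Along a trajectory of the ODE `x'(s) = v(x(s), s)`, if the density `p`
satisfies the Liouville continuity equation, then the derivative of
`s ↦ log p(x(s), s)` equals minus the spatial divergence of `v` at `(x(s), s)`. -/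
theorem log_density_derivative_eq_neg_divergence
    (d : ℕ) (hd : 0 < d)
    (v : EuclideanSpace ℝ (Fin d) × ℝ → EuclideanSpace ℝ (Fin d))
    (hv : ContDiff ℝ 1 v)
    (p : EuclideanSpace ℝ (Fin d) × ℝ → ℝ)
    (hp : ContDiff ℝ 1 p)
    (hp_pos : ∀ (x : EuclideanSpace ℝ (Fin d)) (s : ℝ), 0 < p (x, s))
    (hLiouville : ∀ (x : EuclideanSpace ℝ (Fin d)) (s : ℝ),
      deriv (fun t => p (x, t)) s
        + ∑ i : Fin d,
            fderiv ℝ (fun y => p (y, s) * v (y, s) i) x (EuclideanSpace.single i 1) = 0)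
    (x : ℝ → EuclideanSpace ℝ (Fin d))
    (hx : ∀ s : ℝ, HasDerivAt x (v (x s, s)) s) :
    ∀ s : ℝ, HasDerivAt (fun t => Real.log (p (x t, t)))
      (-∑ i : Fin d,
          fderiv ℝ (fun y => v (y, s) i) (x s) (EuclideanSpace.single i 1)) s := by
  intro s
  set z : EuclideanSpace ℝ (Fin d) × ℝ := (x s, s) with hz
  have hpz : p z ≠ 0 := (hp_pos (x s) s).ne'
  have hps : DifferentiableAt ℝ p z := (hp.differentiable one_ne_zero) z
  have hcurve : HasDerivAt (fun t => (x t, t)) ((v z, 1) : EuclideanSpace ℝ (Fin d) × ℝ) s :=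
    (hx s).prodMk (hasDerivAt_id s)
  have hq0 : HasDerivAt (p ∘ fun t => (x t, t)) (fderiv ℝ p z (v z, 1)) s :=
    HasFDerivAt.comp_hasDerivAt s hps.hasFDerivAt hcurve
  have hq : HasDerivAt (fun t => p (x t, t)) (fderiv ℝ p z (v z, 1)) s := hq0
  have hlog : HasDerivAt (fun t => Real.log (p (x t, t)))
      (fderiv ℝ p z (v z, 1) / p z) s := hq.log hpz
  convert hlog using 1
  -- partial derivative facts
  have h1 : HasFDerivAt (fun y => p (y, s))
      ((fderiv ℝ p z).comp (ContinuousLinearMap.inl ℝ (EuclideanSpace ℝ (Fin d)) ℝ)) (x s) :=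
    hps.hasFDerivAt.comp (x s) (hasFDerivAt_prodMk_left (x s) s)
  have h2 : HasFDerivAt (fun t => p (x s, t))
      ((fderiv ℝ p z).comp (ContinuousLinearMap.inr ℝ (EuclideanSpace ℝ (Fin d)) ℝ)) s :=
    hps.hasFDerivAt.comp s (hasFDerivAt_prodMk_right (x s) s)
  have hB : deriv (fun t => p (x s, t)) s = fderiv ℝ p z (0, 1) := by
    have := h2.hasDerivAt.deriv
    simpa using this
  -- differentiability of partial maps
  have hpsdiff : DifferentiableAt ℝ (fun y => p (y, s)) (x s) := h1.differentiableAt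
  have hvi : ∀ i : Fin d, DifferentiableAt ℝ (fun y => v (y, s) i) (x s) := by
    intro i
    have hvd : DifferentiableAt ℝ (fun y => v (y, s)) (x s) :=
      ((hv.differentiable one_ne_zero) z).comp (x s)
        (hasFDerivAt_prodMk_left (x s) s).differentiableAt
    exact ((EuclideanSpace.proj i : EuclideanSpace ℝ (Fin d) →L[ℝ] ℝ).differentiableAt).comp
      (x s) hvd
  -- product rule applied in Liouville
  have hprod : ∀ i : Fin d,
      fderiv ℝ (fun y => p (y, s) * v (y, s) i) (x s) (EuclideanSpace.single i 1)
        = p z * fderiv ℝ (fun y => v (y, s) i) (x s) (EuclideanSpace.single i 1)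
          + v z i * fderiv ℝ (fun y => p (y, s)) (x s) (EuclideanSpace.single i 1) := by
    intro i
    rw [fderiv_fun_mul hpsdiff (hvi i)]
    simp [hz]
  have hL := hLiouville (x s) s
  rw [Finset.sum_congr rfl (fun i _ => hprod i), hB] at hL
  -- decompose fderiv p z (v z, 1)
  have hsplit : fderiv ℝ p z (v z, 1)
      = fderiv ℝ (fun y => p (y, s)) (x s) (v z) + fderiv ℝ p z (0, 1) := by
    have e1 : fderiv ℝ (fun y => p (y, s)) (x s) (v z) = fderiv ℝ p z (v z, 0) := by
      rw [h1.fderiv]; rfl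
    have : ((v z, 1) : EuclideanSpace ℝ (Fin d) × ℝ) = (v z, 0) + (0, 1) := by simp
    rw [e1, this, map_add]
  have hdecomp : fderiv ℝ (fun y => p (y, s)) (x s) (v z)
      = ∑ i : Fin d, v z i * fderiv ℝ (fun y => p (y, s)) (x s) (EuclideanSpace.single i 1) := by
    conv_lhs => rw [euclid_decomp (v z)]
    rw [map_sum]
    simp [smul_eq_mul]
  rw [Finset.sum_add_distrib] at hL
  rw [hsplit, hdecomp]
  have hsum : fderiv ℝ p z (0,1)
      = -(∑ i : Fin d, p z * fderiv ℝ (fun y => v (y, s) i) (x s) (EuclideanSpace.single i 1))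
        - ∑ i : Fin d, v z i * fderiv ℝ (fun y => p (y, s)) (x s) (EuclideanSpace.single i 1) := by
    linarith [hL]
  rw [hsum, ← Finset.mul_sum]
  field_simp
  ring
end

section
/- Let v : ℝ × ℝ → ℝ be continuously differentiable and let p : ℝ × ℝ → ℝ be continuously differentiable and strictly positive, satisfying the one-dimensional Liouville continuity equation ∂_s p(x,s) + ∂_x( p(x,s) v(x,s) ) = 0 for all x ∈ ℝ and s ∈ ℝ. Let x : ℝ → ℝ be differentiable with x'(s) = v(x(s), s) for all s ∈ [0,1]. Then log p(x(0), 0) = log p(x(1), 1) + ∫_0^1 ∂_x v(x(s), s) ds. -/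
/-- Single-step log-density formula of a one-dimensional continuous normalizing flow:
if `p` satisfies the 1-D Liouville continuity equation and `x` solves `x' = v(x, s)`
on `[0,1]`, then `log p(x(0), 0) = log p(x(1), 1) + ∫_0^1 ∂_x v(x(s), s) ds`. -/
theorem cnf_log_density_formula
    (v : ℝ × ℝ → ℝ) (hv : ContDiff ℝ 1 v)
    (p : ℝ × ℝ → ℝ) (hp : ContDiff ℝ 1 p)
    (hp_pos : ∀ (x s : ℝ), 0 < p (x, s))
    (hLiouville : ∀ (x s : ℝ),
      deriv (fun t => p (x, t)) s + deriv (fun y => p (y, s) * v (y, s)) x = 0)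
    (x : ℝ → ℝ)
    (hx : ∀ s ∈ Set.Icc (0 : ℝ) 1, HasDerivAt x (v (x s, s)) s) :
    Real.log (p (x 0, 0))
      = Real.log (p (x 1, 1)) + ∫ s in (0 : ℝ)..1, deriv (fun y => v (y, s)) (x s) := by
  set F := fderiv ℝ p with hF
  set G := fderiv ℝ v with hG
  have hpd : Differentiable ℝ p := hp.differentiable one_ne_zero
  have hvd : Differentiable ℝ v := hv.differentiable one_ne_zero
  -- partial derivatives expressed via fderiv
  have hpx : ∀ a s : ℝ, HasDerivAt (fun y => p (y, s)) (F (a, s) (1, 0)) a := by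
    intro a s
    exact (hpd (a, s)).hasFDerivAt.comp_hasDerivAt a
      ((hasDerivAt_id a).prodMk (hasDerivAt_const a s))
  have hps : ∀ a s : ℝ, HasDerivAt (fun t => p (a, t)) (F (a, s) (0, 1)) s := by
    intro a s
    exact (hpd (a, s)).hasFDerivAt.comp_hasDerivAt s
      ((hasDerivAt_const s a).prodMk (hasDerivAt_id s))
  have hvx : ∀ a s : ℝ, HasDerivAt (fun y => v (y, s)) (G (a, s) (1, 0)) a := by
    intro a s
    exact (hvd (a, s)).hasFDerivAt.comp_hasDerivAt a
      ((hasDerivAt_id a).prodMk (hasDerivAt_const a s))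
  -- Liouville rewritten
  have hLiou : ∀ a s : ℝ,
      F (a, s) (0, 1) + (F (a, s) (1, 0) * v (a, s) + p (a, s) * G (a, s) (1, 0)) = 0 := by
    intro a s
    have h1 := (hps a s).deriv
    have h2 := ((hpx a s).fun_mul (hvx a s)).deriv
    have := hLiouville a s
    rw [h1, h2] at this
    linarith [this]
  -- derivative of log density along the flow
  have key : ∀ s ∈ Set.uIcc (0 : ℝ) 1,
      HasDerivAt (fun t => Real.log (p (x t, t))) (-(G (x s, s) (1, 0))) s := by
    intro s hs
    rw [Set.uIcc_of_le (by norm_num : (0:ℝ) ≤ 1)] at hs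
    have hcurve : HasDerivAt (fun t => (x t, t)) (v (x s, s), 1) s :=
      (hx s hs).prodMk (hasDerivAt_id s)
    have hpc : HasDerivAt (fun t => p (x t, t)) (F (x s, s) (v (x s, s), 1)) s := by
      have h := HasFDerivAt.comp_hasDerivAt (f := fun t => (x t, t)) s
        (hpd (x s, s)).hasFDerivAt hcurve
      exact h
    have hlog : HasDerivAt (fun t => Real.log (p (x t, t)))
        (F (x s, s) (v (x s, s), 1) / p (x s, s)) s := by
      have h := (Real.hasDerivAt_log (ne_of_gt (hp_pos (x s) s))).comp s hpc
      have he : (p (x s, s))⁻¹ * F (x s, s) (v (x s, s), 1)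
          = F (x s, s) (v (x s, s), 1) / p (x s, s) := by
        rw [div_eq_inv_mul]
      rw [he] at h
      exact h
    have hval : F (x s, s) (v (x s, s), 1) / p (x s, s) = -(G (x s, s) (1, 0)) := by
      have hsplit : F (x s, s) (v (x s, s), 1)
          = v (x s, s) * F (x s, s) (1, 0) + F (x s, s) (0, 1) := by
        have : (v (x s, s), (1:ℝ)) = v (x s, s) • ((1:ℝ), (0:ℝ)) + ((0:ℝ), (1:ℝ)) := by
          rw [Prod.smul_mk, Prod.mk_add_mk]; norm_num
        rw [this, map_add, map_smul]
        simp [smul_eq_mul]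
      have hL := hLiou (x s) s
      rw [hsplit, div_eq_iff (ne_of_gt (hp_pos (x s) s))]
      linear_combination hL
    rw [hval] at hlog
    exact hlog
  -- integrability of the integrand
  have hxc : ContinuousOn x (Set.uIcc (0:ℝ) 1) := by
    rw [Set.uIcc_of_le (by norm_num : (0:ℝ) ≤ 1)]
    exact fun s hs => ((hx s hs).continuousAt).continuousWithinAt
  have hGc : Continuous (fun q : ℝ × ℝ => G q (1, 0)) := by
    have := hv.continuous_fderiv one_ne_zero
    exact (ContinuousLinearMap.apply ℝ ℝ ((1:ℝ), (0:ℝ))).continuous.comp this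
  have hint : IntervalIntegrable (fun s => -(G (x s, s) (1, 0)))
      MeasureTheory.volume 0 1 := by
    apply ContinuousOn.intervalIntegrable
    exact (hGc.comp_continuousOn (hxc.prodMk continuousOn_id)).neg
  have hFTC := intervalIntegral.integral_eq_sub_of_hasDerivAt
    (fun s hs => key s hs) hint
  have hin : (∫ s in (0:ℝ)..1, deriv (fun y => v (y, s)) (x s))
      = ∫ s in (0:ℝ)..1, G (x s, s) (1, 0) := by
    apply intervalIntegral.integral_congr
    intro s _
    exact (hvx (x s) s).deriv
  have hneg : (∫ s in (0:ℝ)..1, -(G (x s, s) (1, 0)))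
      = -∫ s in (0:ℝ)..1, G (x s, s) (1, 0) := intervalIntegral.integral_neg
  rw [hin]
  rw [hneg] at hFTC
  linarith [hFTC]
end

section
/- Let S be a nonempty type and let q : S → ℝ → ℝ be a family of maps such that for every s ∈ S, q(s) is continuous on [0,1] and strictly increasing on [0,1], and such that for all s, s' ∈ S the pushforward under q(s) of Lebesgue measure restricted to [0,1] equals the pushforward under q(s') of Lebesgue measure restricted to [0,1]. Then there exists a single function g : ℝ → ℝ such that for every s ∈ S and every u ∈ [0,1], q(s)(u) = g(u). -/
open MeasureTheory

/-- Deterministic core of Proposition 2 (encoded latent as a function of the exogenous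
noise): if `q s` is continuous and strictly increasing on `[0,1]` for every conditioning
state `s`, and the pushforward of the uniform law on `[0,1]` under `q s` does not depend
on `s`, then there is a single function `g` with `q s u = g u` for all `s` and `u ∈ [0,1]`. -/
theorem encoder_functionally_invariant
    (S : Type*) [Nonempty S]
    (q : S → ℝ → ℝ)
    (hq_cont : ∀ s : S, ContinuousOn (q s) (Set.Icc (0 : ℝ) 1))
    (hq_mono : ∀ s : S, StrictMonoOn (q s) (Set.Icc (0 : ℝ) 1))
    (hmap : ∀ s s' : S, (volume.restrict (Set.Icc (0 : ℝ) 1)).map (q s)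
      = (volume.restrict (Set.Icc (0 : ℝ) 1)).map (q s')) :
    ∃ g : ℝ → ℝ, ∀ (s : S), ∀ u ∈ Set.Icc (0 : ℝ) 1, q s u = g u := by
  classical
  obtain ⟨s₀⟩ := ‹Nonempty S›
  have hpre : ∀ (s : S), ∀ u ∈ Set.Icc (0:ℝ) 1,
      (q s ⁻¹' Set.Iic (q s u)) ∩ Set.Icc (0:ℝ) 1 = Set.Icc 0 u := by
    intro s u hu
    ext v
    simp only [Set.mem_inter_iff, Set.mem_preimage, Set.mem_Iic, Set.mem_Icc]
    constructor
    · rintro ⟨hv, hv0, hv1⟩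
      exact ⟨hv0, ((hq_mono s).le_iff_le ⟨hv0, hv1⟩ hu).mp hv⟩
    · rintro ⟨hv0, hvu⟩
      have hv1 : v ≤ 1 := hvu.trans hu.2
      exact ⟨((hq_mono s).le_iff_le ⟨hv0, hv1⟩ hu).mpr hvu, hv0, hv1⟩
  have hF : ∀ (s : S), ∀ u ∈ Set.Icc (0:ℝ) 1,
      ((volume.restrict (Set.Icc (0:ℝ) 1)).map (q s)) (Set.Iic (q s u))
        = ENNReal.ofReal u := by
    intro s u hu
    rw [Measure.map_apply_of_aemeasurable
        ((hq_cont s).aemeasurable measurableSet_Icc) measurableSet_Iic,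
      Measure.restrict_apply' measurableSet_Icc, hpre s u hu, Real.volume_Icc]
    simp
  have key : ∀ s s' : S, ∀ u ∈ Set.Icc (0:ℝ) 1, ∀ u' ∈ Set.Icc (0:ℝ) 1,
      q s u < q s' u' → u ≤ u' := by
    intro s s' u hu u' hu' hlt
    have h1 := hF s u hu
    have h2 := hF s' u' hu'
    rw [hmap s s'] at h1
    have hmono : ((volume.restrict (Set.Icc (0:ℝ) 1)).map (q s')) (Set.Iic (q s u))
        ≤ ((volume.restrict (Set.Icc (0:ℝ) 1)).map (q s')) (Set.Iic (q s' u')) :=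
      measure_mono (Set.Iic_subset_Iic.mpr hlt.le)
    rw [h1, h2] at hmono
    exact (ENNReal.ofReal_le_ofReal_iff hu'.1).mp hmono
  have main : ∀ s s' : S, ∀ u ∈ Set.Icc (0:ℝ) 1, ¬ q s u < q s' u := by
    intro s s' u hu hlt
    rcases eq_or_lt_of_le hu.1 with h0 | h0
    · -- u = 0
      have hu0 : u = 0 := h0.symm
      subst hu0
      have hc : ContinuousWithinAt (q s) (Set.Icc (0:ℝ) 1) 0 := (hq_cont s) 0 hu
      have hev : ∀ᶠ v in nhdsWithin 0 (Set.Icc (0:ℝ) 1), q s v < q s' 0 :=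
        hc.eventually_lt_const hlt
      have hne : (nhdsWithin (0:ℝ) (Set.Ioc (0:ℝ) 1)).NeBot := by
        rw [← mem_closure_iff_nhdsWithin_neBot, closure_Ioc (by norm_num : (0:ℝ) ≠ 1)]
        exact ⟨le_rfl, zero_le_one⟩
      have hev' : ∀ᶠ v in nhdsWithin 0 (Set.Ioc (0:ℝ) 1),
          q s v < q s' 0 ∧ v ∈ Set.Ioc (0:ℝ) 1 :=
        ((hev.filter_mono (nhdsWithin_mono _ Set.Ioc_subset_Icc_self)).and
          eventually_mem_nhdsWithin)
      obtain ⟨v, hv1, hv2⟩ := hev'.exists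
      have := key s s' v ⟨hv2.1.le, hv2.2⟩ 0 hu hv1
      exact absurd this (not_le.mpr hv2.1)
    · -- u > 0
      have hc : ContinuousWithinAt (q s') (Set.Icc (0:ℝ) 1) u := (hq_cont s') u hu
      have hev : ∀ᶠ v in nhdsWithin u (Set.Icc (0:ℝ) 1), q s u < q s' v :=
        hc.eventually_const_lt hlt
      have hne : (nhdsWithin u (Set.Ico (0:ℝ) u)).NeBot := by
        rw [← mem_closure_iff_nhdsWithin_neBot, closure_Ico h0.ne]
        exact ⟨hu.1, le_rfl⟩
      have hsub : Set.Ico (0:ℝ) u ⊆ Set.Icc (0:ℝ) 1 :=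
        fun v hv => ⟨hv.1, hv.2.le.trans hu.2⟩
      have hev' : ∀ᶠ v in nhdsWithin u (Set.Ico (0:ℝ) u),
          q s u < q s' v ∧ v ∈ Set.Ico (0:ℝ) u :=
        ((hev.filter_mono (nhdsWithin_mono _ hsub)).and eventually_mem_nhdsWithin)
      obtain ⟨v, hv1, hv2⟩ := hev'.exists
      have := key s s' u hu v ⟨hv2.1, hv2.2.le.trans hu.2⟩ hv1
      exact absurd this (not_le.mpr hv2.2)
  refine ⟨q s₀, fun s u hu => ?_⟩
  rcases lt_trichotomy (q s u) (q s₀ u) with h | h | h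
  · exact absurd h (main s s₀ u hu)
  · exact h
  · exact absurd h (main s₀ s u hu)
end

section
/- Let (Ω, 𝔽, μ) be a probability space, let 𝒮 be a measurable space with countably generated σ-algebra, let S : Ω → 𝒮 and U : Ω → ℝ be measurable with S and U independent, and let F : 𝒮 × ℝ → ℝ be measurable (jointly). Write Z(ω) = F(S(ω), U(ω)). If additionally Z and S are independent, then for (μ.map S)-almost every s ∈ 𝒮, the pushforward of the law of U under F(s,·) equals the law of Z; i.e. (μ.map U).map(F(s,·)) = μ.map Z for a.e. s. -/
open MeasureTheory
open scoped ProbabilityTheory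

/-- Key consequence of Assumption (A3): if `Z = F(S, U)` is independent of the
conditioning state `S` (with `S` and `U` themselves independent), then for almost
every `s` with respect to the law of `S`, the pushforward of the law of `U` under
`F(s, ·)` equals the (marginal) law of `Z`. -/
theorem conditional_law_eq_marginal_of_indep
    {Ω : Type*} [MeasurableSpace Ω] (μ : Measure Ω) [IsProbabilityMeasure μ]
    {𝒮 : Type*} [MeasurableSpace 𝒮] [MeasurableSpace.CountablyGenerated 𝒮]
    (S : Ω → 𝒮) (U : Ω → ℝ)
    (hS : Measurable S) (hU : Measurable U)
    (hindepSU : ProbabilityTheory.IndepFun S U μ)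
    (F : 𝒮 × ℝ → ℝ) (hF : Measurable F)
    (hindepZS : ProbabilityTheory.IndepFun (fun ω => F (S ω, U ω)) S μ) :
    ∀ᵐ s ∂(μ.map S),
      (μ.map U).map (fun u => F (s, u)) = μ.map (fun ω => F (S ω, U ω)) := by
  set Z : Ω → ℝ := fun ω => F (S ω, U ω) with hZdef
  have hZ : Measurable Z := hF.comp (hS.prodMk hU)
  -- the joint law of (S, Z)
  set ρ : Measure (𝒮 × ℝ) := μ.map (fun ω => (S ω, Z ω)) with hρdef
  have hρ_finite : IsProbabilityMeasure ρ := Measure.isProbabilityMeasure_map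
    ((hS.prodMk hZ).aemeasurable)
  have hfst : ρ.fst = μ.map S := by
    rw [hρdef, Measure.fst, Measure.map_map measurable_fst (hS.prodMk hZ)]
    rfl
  -- the kernel s ↦ (μ.map U).map (F (s, ·))
  set κ : ProbabilityTheory.Kernel 𝒮 ℝ :=
    ProbabilityTheory.Kernel.map
      (ProbabilityTheory.Kernel.prod
        (ProbabilityTheory.Kernel.deterministic id measurable_id)
        (ProbabilityTheory.Kernel.const 𝒮 (μ.map U))) F with hκdef
  have hκ_apply : ∀ s, κ s = (μ.map U).map (fun u => F (s, u)) := by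
    intro s
    rw [hκdef, ProbabilityTheory.Kernel.map_apply _ hF,
      ProbabilityTheory.Kernel.prod_apply, ProbabilityTheory.Kernel.deterministic_apply,
      ProbabilityTheory.Kernel.const_apply, Measure.dirac_prod,
      Measure.map_map hF (measurable_prodMk_left)]
    rfl
  have hκ_markov : ProbabilityTheory.IsMarkovKernel κ := by
    rw [hκdef]
    have : IsProbabilityMeasure (μ.map U) := Measure.isProbabilityMeasure_map hU.aemeasurable
    exact ProbabilityTheory.Kernel.IsMarkovKernel.map _ hF
  -- joint law of (S, U) is the product of marginals
  have hSU : μ.map (fun ω => (S ω, U ω)) = (μ.map S).prod (μ.map U) :=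
    (ProbabilityTheory.indepFun_iff_map_prod_eq_prod_map_map hS.aemeasurable
      hU.aemeasurable).mp hindepSU
  -- claim 1 : ρ = ρ.fst ⊗ₘ κ
  have hclaim1 : ρ = ρ.fst ⊗ₘ κ := by
    rw [hfst]
    ext t ht
    rw [Measure.compProd_apply ht]
    have hg : Measurable (fun p : 𝒮 × ℝ => (p.1, F p)) := measurable_fst.prodMk hF
    have h1 : ρ = (μ.map (fun ω => (S ω, U ω))).map (fun p : 𝒮 × ℝ => (p.1, F p)) := by
      rw [Measure.map_map hg (hS.prodMk hU)]
      rfl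
    rw [h1, hSU, Measure.map_apply hg ht, Measure.prod_apply (hg ht)]
    refine lintegral_congr fun s => ?_
    rw [hκ_apply s, Measure.map_apply (f := fun u => F (s, u))
      (hF.comp measurable_prodMk_left) (measurable_prodMk_left ht)]
    rfl
  -- claim 2 : ρ = ρ.fst ⊗ₘ const (μ.map Z)
  have hZS : μ.map (fun ω => (S ω, Z ω)) = (μ.map S).prod (μ.map Z) :=
    (ProbabilityTheory.indepFun_iff_map_prod_eq_prod_map_map hS.aemeasurable
      hZ.aemeasurable).mp hindepZS.symm
  have hclaim2 : ρ = ρ.fst ⊗ₘ ProbabilityTheory.Kernel.const 𝒮 (μ.map Z) := by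
    rw [hfst, Measure.compProd_const, hρdef, hZS]
  have h1 := ProbabilityTheory.eq_condKernel_of_measure_eq_compProd κ hclaim1
  have h2 := ProbabilityTheory.eq_condKernel_of_measure_eq_compProd
    (ProbabilityTheory.Kernel.const 𝒮 (μ.map Z)) hclaim2
  rw [hfst] at h1 h2
  filter_upwards [h1, h2] with s hs1 hs2
  rw [← hκ_apply s, hs1, ← hs2, ProbabilityTheory.Kernel.const_apply]
end

section
/- Let Φ : ℝ → (ℕ → ℝ) → ℕ → ℝ, f : (ℕ → ℝ) → ℕ → ℝ → ℝ, and g : ℝ → ℝ be functions satisfying: (Causality) for all trajectories x, y : ℕ → ℝ and all t ∈ ℕ, if x(s) = y(s) for every s < t then f(x, t, u) = f(y, t, u) for all u and Φ(z, x, t) = Φ(z, y, t) for all z; (Injectivity) for every trajectory x and every t, the map z ↦ Φ(z, x, t) is injective; (Invariance) for every trajectory x, every t, and every u, Φ( f(x, t, u), x, t ) = g(u). Let u : ℕ → ℝ be a noise sequence, let I ⊆ ℕ be an intervention set with values γ : ℕ → ℝ, and let x_F, x_CF, x̂ : ℕ → ℝ be sequences satisfying: x_F(t) = f(x_F, t,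 u(t)) for all t; x_CF(t) = γ(t) if t ∈ I and x_CF(t) = f(x_CF, t, u(t)) otherwise; x̂(t) = γ(t) if t ∈ I and Φ( x̂(t), x̂, t ) = Φ( x_F(t), x_F, t ) otherwise. Then x̂(t) = x_CF(t) for every t ∈ ℕ. -/
/-- Counterfactual recovery over trajectories (paper's Corollary): under causality of
the mechanism `f` and the encoder `Φ` in the past of the trajectory, injectivity of the
encoder in the value, and invariance of the encoded mechanism output (it equals `g(u)`,
a function of the exogenous noise only), the abduction–action–prediction procedure `x̂`
recovers the true counterfactual trajectory `x_CF` exactly. -/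
theorem counterfactual_trajectory_recovery
    (Φ : ℝ → (ℕ → ℝ) → ℕ → ℝ)
    (f : (ℕ → ℝ) → ℕ → ℝ → ℝ)
    (g : ℝ → ℝ)
    (hcausal : ∀ (x y : ℕ → ℝ) (t : ℕ), (∀ s < t, x s = y s) →
      (∀ u : ℝ, f x t u = f y t u) ∧ (∀ z : ℝ, Φ z x t = Φ z y t))
    (hinj : ∀ (x : ℕ → ℝ) (t : ℕ), Function.Injective (fun z => Φ z x t))
    (hinv : ∀ (x : ℕ → ℝ) (t : ℕ) (u : ℝ), Φ (f x t u) x t = g u)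
    (u : ℕ → ℝ) (I : Set ℕ) (γ : ℕ → ℝ)
    (xF xCF xhat : ℕ → ℝ)
    (hxF : ∀ t, xF t = f xF t (u t))
    (hxCF : ∀ t, (t ∈ I → xCF t = γ t) ∧ (t ∉ I → xCF t = f xCF t (u t)))
    (hxhat : ∀ t, (t ∈ I → xhat t = γ t) ∧ (t ∉ I → Φ (xhat t) xhat t = Φ (xF t) xF t)) :
    ∀ t : ℕ, xhat t = xCF t := by
  intro t
  induction t using Nat.strong_induction_on with
  | _ t ih =>
    by_cases ht : t ∈ I
    · rw [(hxhat t).1 ht, (hxCF t).1 ht]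
    · have hpast : ∀ s < t, xhat s = xCF s := ih
      have hΦ := (hcausal xhat xCF t hpast).2
      have h1 : Φ (xhat t) xCF t = Φ (xF t) xF t := by
        rw [← hΦ (xhat t)]; exact (hxhat t).2 ht
      have h2 : Φ (xF t) xF t = g (u t) := by
        rw [hxF t]; exact hinv xF t (u t)
      have h3 : Φ (xCF t) xCF t = g (u t) := by
        rw [(hxCF t).2 ht]; exact hinv xCF t (u t)
      exact hinj xCF t (by simp only []; rw [h1, h2, h3])
end
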